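/- arXiv:1707.09954 — 5 statements merged into one kernel-verified Lean document; each statement's English description precedes it below -/
import Mathlib

section
/- Let α > 0, β > 0 and γ ≠ 0 be real numbers. Then the function u(x,t) = (105α²/(169γβ)) · sech⁴( (1/2)√(α/(13β)) · (x − (36α²/(169β)) t) ) satisfies the fifth-order Korteweg–de Vries equation u_t + γ u u_x + α u_xxx = β u_xxxxx at every point (x,t) ∈ ℝ². -/
open Real in
lemma kdvL0 (A y : ℝ) : HasDerivAt (fun z => A * (Real.cosh z)⁻¹ ^ 4)
    (-4*A*(Real.sinh y * (Real.cosh y)⁻¹^5)) y := by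
  have hch : Real.cosh y ≠ 0 := (Real.cosh_pos y).ne'
  have h := (((Real.hasDerivAt_cosh y).inv hch).pow 4).const_mul A
  refine h.congr_deriv (Eq.symm ?_)
  simp only [Pi.inv_apply, Pi.pow_apply, Nat.reduceSub, Nat.cast_ofNat]
  field_simp

open Real in
lemma kdvL1 (A y : ℝ) : HasDerivAt (fun z => -4*A*(Real.sinh z * (Real.cosh z)⁻¹^5))
    (16*A*(Real.cosh y)⁻¹^4 - 20*A*(Real.cosh y)⁻¹^6) y := by
  have hch : Real.cosh y ≠ 0 := (Real.cosh_pos y).ne'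
  have hs : Real.sinh y ^ 2 = Real.cosh y ^ 2 - 1 := Real.sinh_sq y
  have h := ((Real.hasDerivAt_sinh y).mul (((Real.hasDerivAt_cosh y).inv hch).pow 5)).const_mul (-4*A)
  refine h.congr_deriv (Eq.symm ?_)
  simp only [Pi.inv_apply, Pi.pow_apply, Nat.reduceSub, Nat.cast_ofNat]
  field_simp
  linear_combination (-20*A) * hs

lemma kdvL2 (A y : ℝ) : HasDerivAt (fun z => 16*A*(Real.cosh z)⁻¹^4 - 20*A*(Real.cosh z)⁻¹^6)
    (120*A*(Real.sinh y*(Real.cosh y)⁻¹^7) - 64*A*(Real.sinh y*(Real.cosh y)⁻¹^5)) y := by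
  have hch : Real.cosh y ≠ 0 := (Real.cosh_pos y).ne'
  have h := ((((Real.hasDerivAt_cosh y).inv hch).pow 4).const_mul (16*A)).sub
    ((((Real.hasDerivAt_cosh y).inv hch).pow 6).const_mul (20*A))
  refine h.congr_deriv (Eq.symm ?_)
  simp only [Pi.inv_apply, Pi.pow_apply, Nat.reduceSub, Nat.cast_ofNat]
  field_simp
  ring

lemma kdvL3 (A y : ℝ) : HasDerivAt
    (fun z => 120*A*(Real.sinh z*(Real.cosh z)⁻¹^7) - 64*A*(Real.sinh z*(Real.cosh z)⁻¹^5))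
    (840*A*(Real.cosh y)⁻¹^8 - 1040*A*(Real.cosh y)⁻¹^6 + 256*A*(Real.cosh y)⁻¹^4) y := by
  have hch : Real.cosh y ≠ 0 := (Real.cosh_pos y).ne'
  have hs : Real.sinh y ^ 2 = Real.cosh y ^ 2 - 1 := Real.sinh_sq y
  have h := (((Real.hasDerivAt_sinh y).mul (((Real.hasDerivAt_cosh y).inv hch).pow 7)).const_mul (120*A)).sub
    (((Real.hasDerivAt_sinh y).mul (((Real.hasDerivAt_cosh y).inv hch).pow 5)).const_mul (64*A))
  refine h.congr_deriv (Eq.symm ?_)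
  simp only [Pi.inv_apply, Pi.pow_apply, Nat.reduceSub, Nat.cast_ofNat]
  field_simp
  linear_combination (840*A - 320*A*Real.cosh y^2) * hs

lemma kdvL4 (A y : ℝ) : HasDerivAt
    (fun z => 840*A*(Real.cosh z)⁻¹^8 - 1040*A*(Real.cosh z)⁻¹^6 + 256*A*(Real.cosh z)⁻¹^4)
    (-6720*A*(Real.sinh y*(Real.cosh y)⁻¹^9) + 6240*A*(Real.sinh y*(Real.cosh y)⁻¹^7)
      - 1024*A*(Real.sinh y*(Real.cosh y)⁻¹^5)) y := by
  have hch : Real.cosh y ≠ 0 := (Real.cosh_pos y).ne'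
  have h := (((((Real.hasDerivAt_cosh y).inv hch).pow 8).const_mul (840*A)).sub
    ((((Real.hasDerivAt_cosh y).inv hch).pow 6).const_mul (1040*A))).add
    ((((Real.hasDerivAt_cosh y).inv hch).pow 4).const_mul (256*A))
  refine h.congr_deriv (Eq.symm ?_)
  simp only [Pi.inv_apply, Pi.pow_apply, Nat.reduceSub, Nat.cast_ofNat]
  field_simp
  ring

/-- The sech⁴ profile
`u(x,t) = (105α²/(169γβ)) · sech⁴((1/2)√(α/(13β)) (x − (36α²/(169β)) t))`
solves the fifth-order KdV equation `u_t + γ u u_x + α u_xxx = β u_xxxxx`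
for all `(x,t) ∈ ℝ²`, when `α > 0`, `β > 0`, `γ ≠ 0`. -/
theorem fifth_order_kdv_sech4_soliton
    (α β γ : ℝ) (hα : 0 < α) (hβ : 0 < β) (hγ : γ ≠ 0)
    (u : ℝ → ℝ → ℝ)
    (hu : ∀ x t : ℝ, u x t =
      105 * α ^ 2 / (169 * γ * β) *
        (1 / Real.cosh ((1 / 2) * Real.sqrt (α / (13 * β)) *
          (x - 36 * α ^ 2 / (169 * β) * t))) ^ 4) :
    ∀ x t : ℝ,
      deriv (fun t' => u x t') t
        + γ * u x t * deriv (fun x' => u x' t) x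
        + α * iteratedDeriv 3 (fun x' => u x' t) x
      = β * iteratedDeriv 5 (fun x' => u x' t) x := by
  intro x t
  set k : ℝ := 1 / 2 * Real.sqrt (α / (13 * β)) with hkdef
  set c : ℝ := 36 * α ^ 2 / (169 * β) with hcdef
  set A : ℝ := 105 * α ^ 2 / (169 * γ * β) with hAdef
  have hk2 : k ^ 2 = α / (52 * β) := by
    rw [hkdef, mul_pow, Real.sq_sqrt (by positivity : (0:ℝ) ≤ α / (13 * β))]
    ring
  -- inner chain rules
  have hin : ∀ x' : ℝ, HasDerivAt (fun x'' : ℝ => k * (x'' - c * t)) k x' := by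
    intro x'
    have h := ((hasDerivAt_id x').sub_const (c * t)).const_mul k
    simpa using h
  have hint : HasDerivAt (fun t' : ℝ => k * (x - c * t')) (-(k * c)) t := by
    have h := (((hasDerivAt_id t).const_mul c).const_sub x).const_mul k
    refine h.congr_deriv (Eq.symm ?_)
    ring
  -- the profile as a clean function of x
  have hfun : (fun x' => u x' t) = (fun x' => A * (Real.cosh (k * (x' - c * t)))⁻¹ ^ 4) := by
    funext x'
    rw [hu, one_div]
  -- successive x-derivatives
  have e1 : deriv (fun x' => u x' t)
      = fun x' => (-4*A*(Real.sinh (k*(x'-c*t)) * (Real.cosh (k*(x'-c*t)))⁻¹^5)) * k := by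
    rw [hfun]; funext x'
    exact (((kdvL0 A (k*(x'-c*t))).comp x' (hin x'))).deriv
  have e2 : deriv (fun x' => (-4*A*(Real.sinh (k*(x'-c*t)) * (Real.cosh (k*(x'-c*t)))⁻¹^5)) * k)
      = fun x' => (16*A*(Real.cosh (k*(x'-c*t)))⁻¹^4 - 20*A*(Real.cosh (k*(x'-c*t)))⁻¹^6) * k^2 := by
    funext x'
    refine ((((kdvL1 A (k*(x'-c*t))).comp x' (hin x')).mul_const (k)).deriv).trans ?_
    ring
  have e3 : deriv (fun x' => (16*A*(Real.cosh (k*(x'-c*t)))⁻¹^4 - 20*A*(Real.cosh (k*(x'-c*t)))⁻¹^6) * k^2)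
      = fun x' => (120*A*(Real.sinh (k*(x'-c*t))*(Real.cosh (k*(x'-c*t)))⁻¹^7)
          - 64*A*(Real.sinh (k*(x'-c*t))*(Real.cosh (k*(x'-c*t)))⁻¹^5)) * k^3 := by
    funext x'
    refine ((((kdvL2 A (k*(x'-c*t))).comp x' (hin x')).mul_const (k^2)).deriv).trans ?_
    ring
  have e4 : deriv (fun x' => (120*A*(Real.sinh (k*(x'-c*t))*(Real.cosh (k*(x'-c*t)))⁻¹^7)
          - 64*A*(Real.sinh (k*(x'-c*t))*(Real.cosh (k*(x'-c*t)))⁻¹^5)) * k^3)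
      = fun x' => (840*A*(Real.cosh (k*(x'-c*t)))⁻¹^8 - 1040*A*(Real.cosh (k*(x'-c*t)))⁻¹^6
          + 256*A*(Real.cosh (k*(x'-c*t)))⁻¹^4) * k^4 := by
    funext x'
    refine ((((kdvL3 A (k*(x'-c*t))).comp x' (hin x')).mul_const (k^3)).deriv).trans ?_
    ring
  have e5 : deriv (fun x' => (840*A*(Real.cosh (k*(x'-c*t)))⁻¹^8 - 1040*A*(Real.cosh (k*(x'-c*t)))⁻¹^6
          + 256*A*(Real.cosh (k*(x'-c*t)))⁻¹^4) * k^4)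
      = fun x' => (-6720*A*(Real.sinh (k*(x'-c*t))*(Real.cosh (k*(x'-c*t)))⁻¹^9)
          + 6240*A*(Real.sinh (k*(x'-c*t))*(Real.cosh (k*(x'-c*t)))⁻¹^7)
          - 1024*A*(Real.sinh (k*(x'-c*t))*(Real.cosh (k*(x'-c*t)))⁻¹^5)) * k^5 := by
    funext x'
    refine ((((kdvL4 A (k*(x'-c*t))).comp x' (hin x')).mul_const (k^4)).deriv).trans ?_
    ring
  -- time derivative
  have et : deriv (fun t' => u x t') t
      = (-4*A*(Real.sinh (k*(x-c*t)) * (Real.cosh (k*(x-c*t)))⁻¹^5)) * (-(k*c)) := by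
    have hft : (fun t' => u x t') = (fun t' => A * (Real.cosh (k * (x - c * t')))⁻¹ ^ 4) := by
      funext t'
      rw [hu, one_div]
    rw [hft]
    exact ((kdvL0 A (k*(x-c*t))).comp t hint).deriv
  simp only [iteratedDeriv_succ, iteratedDeriv_zero]
  rw [e1, e2, e3, e4, e5, et, hu, one_div]
  rw [show k^3 = (α/(52*β)) * k by rw [pow_succ, hk2], show k^5 = (α/(52*β))^2 * k by
    rw [show k^5 = (k^2)^2 * k by ring, hk2]]
  have hch : Real.cosh (k*(x-c*t)) ≠ 0 := (Real.cosh_pos _).ne'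
  rw [hcdef, hAdef]
  field_simp
  ring
end

section
/- Let α > 0, β > 0 and γ ≠ 0, and set c = 36α²/(169β). Then the profile φ(ξ) = (105α²/(169γβ)) · sech⁴( (1/2)√(α/(13β)) ξ ) satisfies the fourth-order ordinary differential equation −c φ + (γ/2) φ² + α φ″ − β φ⁗ = 0 on ℝ. -/
/-- For `α > 0`, `β > 0`, `γ ≠ 0` and `c = 36α²/(169β)`, the profile
`φ(ξ) = (105α²/(169γβ)) sech⁴((1/2)√(α/(13β)) ξ)` satisfies the fourth-order ODE
`−c φ + (γ/2) φ² + α φ″ − β φ⁗ = 0` on `ℝ`. -/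
theorem fifth_order_kdv_traveling_wave_ode
    (α β γ : ℝ) (hα : 0 < α) (hβ : 0 < β) (hγ : γ ≠ 0)
    (c : ℝ) (hc : c = 36 * α ^ 2 / (169 * β))
    (φ : ℝ → ℝ)
    (hφ : ∀ ξ : ℝ, φ ξ =
      105 * α ^ 2 / (169 * γ * β) *
        (1 / Real.cosh ((1 / 2) * Real.sqrt (α / (13 * β)) * ξ)) ^ 4) :
    ∀ ξ : ℝ,
      -c * φ ξ + γ / 2 * φ ξ ^ 2 + α * iteratedDeriv 2 φ ξ
        - β * iteratedDeriv 4 φ ξ = 0 := by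
  set k : ℝ := (1 / 2) * Real.sqrt (α / (13 * β)) with hk
  set A : ℝ := 105 * α ^ 2 / (169 * γ * β) with hA
  have hβ0 : β ≠ 0 := ne_of_gt hβ
  have hk2 : k ^ 2 = α / (52 * β) := by
    have h1 : (0:ℝ) ≤ α / (13 * β) := by positivity
    rw [hk, mul_pow, Real.sq_sqrt h1]; ring
  clear_value k A
  have hφf : φ = fun ξ => A * ((Real.cosh (k * ξ))⁻¹) ^ 4 := by
    funext ξ; rw [hφ ξ, one_div]
  have hc0 : ∀ ξ : ℝ, Real.cosh (k * ξ) ≠ 0 := fun ξ => ne_of_gt (Real.cosh_pos _)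
  have hlin : ∀ ξ : ℝ, HasDerivAt (fun ξ : ℝ => k * ξ) k ξ := by
    intro ξ; simpa using (hasDerivAt_id ξ).const_mul k
  have hcosh : ∀ ξ : ℝ, HasDerivAt (fun ξ => Real.cosh (k * ξ)) (Real.sinh (k * ξ) * k) ξ :=
    fun ξ => (Real.hasDerivAt_cosh (k * ξ)).comp ξ (hlin ξ)
  have hsinh : ∀ ξ : ℝ, HasDerivAt (fun ξ => Real.sinh (k * ξ)) (Real.cosh (k * ξ) * k) ξ :=
    fun ξ => (Real.hasDerivAt_sinh (k * ξ)).comp ξ (hlin ξ)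
  have hv : ∀ ξ : ℝ, HasDerivAt (fun ξ => (Real.cosh (k * ξ))⁻¹)
      (-(Real.sinh (k * ξ) * k) / (Real.cosh (k * ξ)) ^ 2) ξ :=
    fun ξ => (hcosh ξ).inv (hc0 ξ)
  set D1 : ℝ → ℝ := fun ξ => -4 * A * k * (Real.sinh (k * ξ) * ((Real.cosh (k * ξ))⁻¹) ^ 5)
    with hD1def
  set D2 : ℝ → ℝ := fun ξ => A * k ^ 2 *
      (16 * ((Real.cosh (k * ξ))⁻¹) ^ 4 - 20 * ((Real.cosh (k * ξ))⁻¹) ^ 6) with hD2def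
  set D3 : ℝ → ℝ := fun ξ => A * k ^ 3 * (Real.sinh (k * ξ) *
      (-64 * ((Real.cosh (k * ξ))⁻¹) ^ 5 + 120 * ((Real.cosh (k * ξ))⁻¹) ^ 7)) with hD3def
  set D4 : ℝ → ℝ := fun ξ => A * k ^ 4 *
      (256 * ((Real.cosh (k * ξ))⁻¹) ^ 4 - 1040 * ((Real.cosh (k * ξ))⁻¹) ^ 6
        + 840 * ((Real.cosh (k * ξ))⁻¹) ^ 8) with hD4def
  have hs2 : ∀ ξ : ℝ, Real.sinh (k * ξ) ^ 2 = Real.cosh (k * ξ) ^ 2 - 1 :=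
    fun ξ => Real.sinh_sq _
  have hD1 : ∀ ξ : ℝ, HasDerivAt φ (D1 ξ) ξ := by
    intro ξ
    rw [hφf]
    have h := ((hv ξ).pow 4).const_mul A
    convert h using 1
    · rfl
    · rfl
    · rfl
    rw [hD1def]
    have := hc0 ξ
    push_cast
    field_simp
  have hD2 : ∀ ξ : ℝ, HasDerivAt D1 (D2 ξ) ξ := by
    intro ξ
    have h := (((hsinh ξ).mul ((hv ξ).pow 5)).const_mul (-4 * A * k))
    rw [hD1def]
    convert h using 1
    · rfl
    · rfl
    · rfl
    rw [hD2def]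
    have h0 := hc0 ξ
    have h2 := hs2 ξ
    simp only [Pi.pow_apply, Pi.add_apply]
    push_cast
    field_simp
    rw [h2]; ring
  have hD3 : ∀ ξ : ℝ, HasDerivAt D2 (D3 ξ) ξ := by
    intro ξ
    have h := ((((hv ξ).pow 4).const_mul (16:ℝ)).sub
      (((hv ξ).pow 6).const_mul (20:ℝ))).const_mul (A * k ^ 2)
    rw [hD2def]
    convert h using 1
    · rfl
    · rfl
    · rfl
    rw [hD3def]
    have h0 := hc0 ξ
    push_cast
    field_simp
    ring
  have hD4 : ∀ ξ : ℝ, HasDerivAt D3 (D4 ξ) ξ := by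
    intro ξ
    have h := ((hsinh ξ).mul ((((hv ξ).pow 5).const_mul (-64:ℝ)).add
      (((hv ξ).pow 7).const_mul (120:ℝ)))).const_mul (A * k ^ 3)
    rw [hD3def]
    convert h using 1
    · rfl
    · rfl
    · rfl
    rw [hD4def]
    have h0 := hc0 ξ
    have h2 := hs2 ξ
    simp only [Pi.pow_apply, Pi.add_apply]
    push_cast
    field_simp
    rw [h2]; ring
  have ed1 : deriv φ = D1 := funext fun ξ => (hD1 ξ).deriv
  have e2 : iteratedDeriv 2 φ = D2 := by
    rw [iteratedDeriv_succ, iteratedDeriv_one, ed1]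
    exact funext fun ξ => (hD2 ξ).deriv
  have e4 : iteratedDeriv 4 φ = D4 := by
    rw [iteratedDeriv_succ, iteratedDeriv_succ, e2,
      funext fun ξ => (hD3 ξ).deriv]
    exact funext fun ξ => (hD4 ξ).deriv
  intro ξ
  rw [e2, e4, hφf]
  simp only [hD2def, hD4def]
  have hk4 : k ^ 4 = (α / (52 * β)) ^ 2 := by rw [show k^4 = (k^2)^2 by ring, hk2]
  rw [hc, hA, hk2, hk4]
  have h0 := hc0 ξ
  field_simp
  ring
end

section
/- Let γ ≠ 0 and α > 0, and for c > 0 let φ_c(ξ) = (3c/γ) · sech²( (1/2)√(c/α) ξ ). Then the map c ↦ ∫_ℝ φ_c(ξ)² dξ = 24 α^{1/2} c^{3/2}/γ² is differentiable on (0,∞) with derivative 36 α^{1/2} c^{1/2}/γ² > 0; in particular the squared L² norm of the solitary wave is a strictly increasing function of the wave speed c on (0,∞). -/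
open MeasureTheory

open Real Filter Topology

lemma my_sq_le_sinh_sq (t : ℝ) : t ^ 2 ≤ Real.sinh t ^ 2 := by
  rcases le_or_gt 0 t with h | h
  · have := Real.self_le_sinh_iff.mpr h
    nlinarith
  · have h' : (0:ℝ) ≤ -t := by linarith
    have := Real.self_le_sinh_iff.mpr h'
    have hs : Real.sinh (-t) = -Real.sinh t := Real.sinh_neg t
    nlinarith [hs ▸ this]

lemma my_tanh_eq (x : ℝ) :
    Real.tanh x = (1 - Real.exp (-2 * x)) / (1 + Real.exp (-2 * x)) := by
  rw [Real.tanh_eq_sinh_div_cosh, Real.sinh_eq, Real.cosh_eq]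
  have h1 : Real.exp x > 0 := Real.exp_pos x
  have h2 : Real.exp (-x) > 0 := Real.exp_pos (-x)
  have hx : Real.exp x * Real.exp (-x) = 1 := by rw [← Real.exp_add]; simp
  have h3 : Real.exp (-2 * x) = Real.exp (-x) * Real.exp (-x) := by
    rw [← Real.exp_add]; ring_nf
  rw [div_eq_div_iff (by positivity) (by positivity)]
  rw [h3]; nlinarith [hx]

lemma my_tanh_atTop : Tendsto Real.tanh atTop (𝓝 1) := by
  have h : Tendsto (fun x : ℝ => Real.exp (-2 * x)) atTop (𝓝 0) := by
    apply Real.tendsto_exp_atBot.comp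
    exact Tendsto.const_mul_atTop_of_neg (by norm_num) tendsto_id
  have h2 := ((tendsto_const_nhds (x := (1:ℝ))).sub h).div
    ((tendsto_const_nhds (x := (1:ℝ))).add h) (by norm_num)
  simp only [sub_zero, add_zero, div_one] at h2
  exact Tendsto.congr (fun x => (my_tanh_eq x).symm) h2

lemma my_tanh_atBot : Tendsto Real.tanh atBot (𝓝 (-1)) := by
  have h := (my_tanh_atTop.comp (tendsto_neg_atBot_atTop : Tendsto (fun x : ℝ => -x) atBot atTop)).neg
  simp only [Function.comp] at h
  have h2 : Tendsto (fun x : ℝ => -Real.tanh (-x)) atBot (𝓝 (-1)) := by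
    simpa using h
  exact Tendsto.congr (fun x => by rw [Real.tanh_neg, neg_neg]) h2

lemma my_hasDerivAt_tanh (x : ℝ) :
    HasDerivAt Real.tanh ((1 / Real.cosh x) ^ 2) x := by
  have h := (Real.hasDerivAt_sinh x).div (Real.hasDerivAt_cosh x) ((Real.cosh_pos x).ne')
  have heq : (Real.cosh x * Real.cosh x - Real.sinh x * Real.sinh x) / Real.cosh x ^ 2
      = (1 / Real.cosh x) ^ 2 := by
    have h1 := Real.cosh_sq_sub_sinh_sq x
    have hc := (Real.cosh_pos x).ne'
    field_simp
    nlinarith [h1]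
  rw [heq] at h
  exact h.congr_of_eventuallyEq (Filter.Eventually.of_forall fun y =>
    Real.tanh_eq_sinh_div_cosh y)

lemma my_sech_sq_eq (x : ℝ) : (1 / Real.cosh x) ^ 2 = 1 - Real.tanh x ^ 2 := by
  rw [Real.tanh_eq_sinh_div_cosh]
  have h := Real.cosh_sq_sub_sinh_sq x
  have hc := (Real.cosh_pos x).ne'
  field_simp
  linarith

lemma sech4_integrable {k : ℝ} (hk : 0 < k) :
    Integrable (fun ξ : ℝ => (1 / Real.cosh (k * ξ)) ^ 4) := by
  have hbound : Integrable (fun ξ : ℝ => (1 + (k * ξ) ^ 2)⁻¹) := by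
    have := integrable_inv_one_add_sq.comp_mul_left' (R := k) hk.ne'
    simpa using this
  refine hbound.mono (Continuous.aestronglyMeasurable
      (((continuous_const.div (Real.continuous_cosh.comp (continuous_const.mul continuous_id))
        (fun x => (Real.cosh_pos _).ne')).pow 4)))
    (Filter.Eventually.of_forall fun x => ?_)
  have hc : (0:ℝ) < Real.cosh (k * x) := Real.cosh_pos (k * x)
  have h1 : 1 + (k * x) ^ 2 ≤ Real.cosh (k * x) ^ 2 := by
    have := Real.cosh_sq (k * x)
    nlinarith [my_sq_le_sinh_sq (k * x)]
  have hpos : (0:ℝ) < 1 + (k * x) ^ 2 := by positivity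
  rw [Real.norm_eq_abs, Real.norm_eq_abs, abs_of_pos (by positivity),
    abs_of_pos (by positivity)]
  have h2 : (1 / Real.cosh (k * x)) ^ 4 ≤ (1 / Real.cosh (k * x)) ^ 2 := by
    have hle : 1 / Real.cosh (k * x) ≤ 1 := by
      rw [div_le_one hc]; exact Real.one_le_cosh _
    have hnn : 0 ≤ 1 / Real.cosh (k * x) := by positivity
    exact pow_le_pow_of_le_one hnn hle (by norm_num)
  refine h2.trans ?_
  rw [div_pow, one_pow, one_div]
  exact inv_anti₀ hpos h1

lemma sech4_integral {k : ℝ} (hk : 0 < k) :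
    ∫ ξ : ℝ, (1 / Real.cosh (k * ξ)) ^ 4 = 4 / (3 * k) := by
  set g : ℝ → ℝ := fun x => Real.tanh (k * x) - Real.tanh (k * x) ^ 3 / 3 with hg
  have hderiv : ∀ x : ℝ, HasDerivAt g (k * (1 / Real.cosh (k * x)) ^ 4) x := by
    intro x
    have hkx : HasDerivAt (fun x : ℝ => k * x) k x := by
      simpa using (hasDerivAt_id x).const_mul k
    have ht : HasDerivAt (fun x : ℝ => Real.tanh (k * x))
        ((1 / Real.cosh (k * x)) ^ 2 * k) x := (my_hasDerivAt_tanh (k * x)).comp x hkx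
    have h3 : HasDerivAt (fun x : ℝ => Real.tanh (k * x) ^ 3 / 3)
        ((3 * Real.tanh (k * x) ^ 2 * ((1 / Real.cosh (k * x)) ^ 2 * k)) / 3) x := by
      exact (ht.pow 3).div_const 3
    have := ht.sub h3
    refine this.congr_deriv ?_
    have hs := my_sech_sq_eq (k * x)
    have : (1 / Real.cosh (k * x)) ^ 4 = ((1 / Real.cosh (k * x)) ^ 2) ^ 2 := by ring
    rw [this, hs]; ring
  have hint : Integrable (fun x : ℝ => k * (1 / Real.cosh (k * x)) ^ 4) :=
    (sech4_integrable hk).const_mul k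
  have htop : Tendsto g atTop (𝓝 (2/3)) := by
    have hmul : Tendsto (fun x : ℝ => k * x) atTop atTop :=
      Tendsto.const_mul_atTop hk tendsto_id
    have h1 : Tendsto (fun x : ℝ => Real.tanh (k * x)) atTop (𝓝 1) :=
      my_tanh_atTop.comp hmul
    have := h1.sub ((h1.pow 3).div_const 3)
    norm_num at this
    exact this
  have hbot : Tendsto g atBot (𝓝 (-(2/3))) := by
    have hmul : Tendsto (fun x : ℝ => k * x) atBot atBot :=
      Tendsto.const_mul_atBot hk tendsto_id
    have h1 : Tendsto (fun x : ℝ => Real.tanh (k * x)) atBot (𝓝 (-1)) :=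
      my_tanh_atBot.comp hmul
    have := h1.sub ((h1.pow 3).div_const 3)
    norm_num at this
    exact this
  have key : ∫ x : ℝ, k * (1 / Real.cosh (k * x)) ^ 4 = 2/3 - (-(2/3)) :=
    integral_of_hasDerivAt_of_tendsto hderiv hint hbot htop
  rw [integral_const_mul] at key
  field_simp at key ⊢
  linarith

/-- For `γ ≠ 0`, `α > 0`, the map
`c ↦ ∫ℝ φ_c(ξ)² dξ = 24 α^{1/2} c^{3/2}/γ²` (where
`φ_c(ξ) = (3c/γ) sech²((1/2)√(c/α) ξ)`) is differentiable on `(0,∞)` with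
positive derivative `36 α^{1/2} c^{1/2}/γ²`; in particular, the squared `L²`
norm of the solitary wave is strictly increasing in the wave speed `c`. -/
theorem kdv_soliton_L2_norm_increasing_in_speed
    (α γ : ℝ) (hγ : γ ≠ 0) (hα : 0 < α)
    (F : ℝ → ℝ)
    (hF : ∀ c : ℝ, F c =
      ∫ ξ : ℝ, (3 * c / γ *
        (1 / Real.cosh ((1 / 2) * Real.sqrt (c / α) * ξ)) ^ 2) ^ 2) :
    (∀ c : ℝ, 0 < c →
        F c = 24 * α ^ ((1 : ℝ) / 2) * c ^ ((3 : ℝ) / 2) / γ ^ 2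
        ∧ HasDerivAt F (36 * α ^ ((1 : ℝ) / 2) * c ^ ((1 : ℝ) / 2) / γ ^ 2) c
        ∧ 0 < 36 * α ^ ((1 : ℝ) / 2) * c ^ ((1 : ℝ) / 2) / γ ^ 2)
      ∧ StrictMonoOn F (Set.Ioi 0) := by
  -- closed form for F on positive reals
  have hval : ∀ c : ℝ, 0 < c → F c = 24 * Real.sqrt α * (c * Real.sqrt c) / γ ^ 2 := by
    intro c hc
    have hk : 0 < (1 / 2) * Real.sqrt (c / α) := by
      have : 0 < c / α := div_pos hc hα
      positivity
    have hFc : F c = (3 * c / γ) ^ 2 *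
        ∫ ξ : ℝ, (1 / Real.cosh ((1 / 2) * Real.sqrt (c / α) * ξ)) ^ 4 := by
      rw [hF c, ← integral_const_mul]
      congr 1; funext ξ; ring
    rw [hFc, sech4_integral hk]
    have hsq : Real.sqrt (c / α) = Real.sqrt c / Real.sqrt α := Real.sqrt_div' c hα.le ▸ rfl
    have hsc : 0 < Real.sqrt c := Real.sqrt_pos.mpr hc
    have hsa : 0 < Real.sqrt α := Real.sqrt_pos.mpr hα
    have hcc : Real.sqrt c * Real.sqrt c = c := Real.mul_self_sqrt hc.le
    rw [hsq]
    field_simp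
    ring_nf
    rw [Real.sq_sqrt hc.le]
  have hpow : ∀ c : ℝ, 0 < c →
      24 * α ^ ((1 : ℝ) / 2) * c ^ ((3 : ℝ) / 2) / γ ^ 2
        = 24 * Real.sqrt α * (c * Real.sqrt c) / γ ^ 2 := by
    intro c hc
    rw [show ((3 : ℝ)/2) = 1 + 1/2 by norm_num, Real.rpow_add hc, Real.rpow_one,
      ← Real.sqrt_eq_rpow, ← Real.sqrt_eq_rpow]
  have hG : ∀ c : ℝ, 0 < c →
      HasDerivAt (fun x : ℝ => 24 * Real.sqrt α * (x * Real.sqrt x) / γ ^ 2)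
        (36 * Real.sqrt α * Real.sqrt c / γ ^ 2) c := by
    intro c hc
    have hsc : 0 < Real.sqrt c := Real.sqrt_pos.mpr hc
    have h1 : HasDerivAt (fun x : ℝ => x * Real.sqrt x)
        (1 * Real.sqrt c + c * (1 / (2 * Real.sqrt c))) c :=
      (hasDerivAt_id c).mul (Real.hasDerivAt_sqrt hc.ne')
    have h2 := (h1.const_mul (24 * Real.sqrt α)).div_const (γ ^ 2)
    refine h2.congr_deriv ?_
    field_simp
    ring_nf
    rw [Real.sq_sqrt hc.le]
    ring
  have hFG : ∀ c : ℝ, 0 < c → HasDerivAt F (36 * Real.sqrt α * Real.sqrt c / γ ^ 2) c := by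
    intro c hc
    refine (hG c hc).congr_of_eventuallyEq ?_
    filter_upwards [Ioi_mem_nhds hc] with x hx
    exact hval x hx
  have hder : ∀ c : ℝ, 0 < c →
      36 * α ^ ((1 : ℝ) / 2) * c ^ ((1 : ℝ) / 2) / γ ^ 2
        = 36 * Real.sqrt α * Real.sqrt c / γ ^ 2 := by
    intro c hc
    rw [← Real.sqrt_eq_rpow, ← Real.sqrt_eq_rpow]
  refine ⟨fun c hc => ⟨?_, ?_, ?_⟩, ?_⟩
  · rw [hval c hc]; exact (hpow c hc).symm
  · rw [hder c hc]; exact hFG c hc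
  · rw [hder c hc]
    have hsc : 0 < Real.sqrt c := Real.sqrt_pos.mpr hc
    have hsa : 0 < Real.sqrt α := Real.sqrt_pos.mpr hα
    positivity
  · intro a ha b hb hab
    simp only [Set.mem_Ioi] at ha hb
    rw [hval a ha, hval b hb]
    have h1 : a * Real.sqrt a < b * Real.sqrt b :=
      mul_lt_mul'' hab (Real.sqrt_lt_sqrt ha.le hab) ha.le (Real.sqrt_nonneg a)
    have hK : (0:ℝ) < 24 * Real.sqrt α := by
      have := Real.sqrt_pos.mpr hα; positivity
    have hg2 : (0:ℝ) < γ ^ 2 := by positivity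
    have := mul_lt_mul_of_pos_left h1 hK
    exact (div_lt_div_iff_of_pos_right hg2).mpr (by linarith)
end

section
/- For each integer j ≥ 0 define b_j = 1680 (2j + 11/2) (j+1)² (j + 9/2)² (2j)! / ( [ (2j+4)(2j+5)(2j+6)(2j+7) − 1680 ] · (2j+10)! ). Then b_j > 0 for every j ≥ 1, the series Σ_{j=1}^∞ b_j converges, and Σ_{j=1}^∞ b_j < (11/10!) · (81/4). -/
private lemma key_poly_ineq (x : ℝ) (hx : 1 ≤ x) :
    5000 * (1680 * (2 * x + 11 / 2) * (x + 1) ^ 2 * (x + 9 / 2) ^ 2) * ((2 * x + 1) * (2 * x + 3))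
      ≤ ((2 * x + 4) * (2 * x + 5) * (2 * x + 6) * (2 * x + 7) - 1680) *
        ((2 * x + 1) * (2 * x + 2) * (2 * x + 3) * (2 * x + 4) * (2 * x + 5) * (2 * x + 6) *
          (2 * x + 7) * (2 * x + 8) * (2 * x + 9) * (2 * x + 10)) := by
  obtain ⟨t, ht, rfl⟩ : ∃ t : ℝ, 0 ≤ t ∧ x = 1 + t := ⟨x - 1, by linarith, by ring⟩
  have key : ((2 * (1 + t) + 4) * (2 * (1 + t) + 5) * (2 * (1 + t) + 6) * (2 * (1 + t) + 7) - 1680) *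
        ((2 * (1 + t) + 1) * (2 * (1 + t) + 2) * (2 * (1 + t) + 3) * (2 * (1 + t) + 4) *
          (2 * (1 + t) + 5) * (2 * (1 + t) + 6) * (2 * (1 + t) + 7) * (2 * (1 + t) + 8) *
          (2 * (1 + t) + 9) * (2 * (1 + t) + 10))
      - 5000 * (1680 * (2 * (1 + t) + 11 / 2) * ((1 + t) + 1) ^ 2 * ((1 + t) + 9 / 2) ^ 2) *
        ((2 * (1 + t) + 1) * (2 * (1 + t) + 3))
      = 207544075200 + 1514079645120*t + 3962189516016*t^2 + 5626430544000*t^3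
        + 5082860361600*t^4 + 3167148673920*t^5 + 1424907309952*t^6 + 474914160000*t^7
        + 118633376000*t^8 + 22205836800*t^9 + 3075867648*t^10 + 306432000*t^11
        + 20787200*t^12 + 860160*t^13 + 16384*t^14 := by ring
  nlinarith [key, pow_nonneg ht 2, pow_nonneg ht 3, pow_nonneg ht 4, pow_nonneg ht 5,
    pow_nonneg ht 6, pow_nonneg ht 7, pow_nonneg ht 8, pow_nonneg ht 9, pow_nonneg ht 10,
    pow_nonneg ht 11, pow_nonneg ht 12, pow_nonneg ht 13, pow_nonneg ht 14]

private lemma fac_split (n : ℕ) :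
    (Nat.factorial (n + 10) : ℝ) = (Nat.factorial n : ℝ) *
      (((n : ℝ) + 1) * ((n : ℝ) + 2) * ((n : ℝ) + 3) * ((n : ℝ) + 4) * ((n : ℝ) + 5) *
        ((n : ℝ) + 6) * ((n : ℝ) + 7) * ((n : ℝ) + 8) * ((n : ℝ) + 9) * ((n : ℝ) + 10)) := by
  have h : Nat.factorial (n + 10) = Nat.factorial n *
      ((n+1)*(n+2)*(n+3)*(n+4)*(n+5)*(n+6)*(n+7)*(n+8)*(n+9)*(n+10)) := by
    simp [Nat.factorial_succ]; ring
  rw [h]; push_cast; ring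

/-- With
`b_j = 1680 (2j+11/2)(j+1)²(j+9/2)² (2j)! / ([(2j+4)(2j+5)(2j+6)(2j+7) − 1680] (2j+10)!)`,
every `b_j` with `j ≥ 1` is positive, the series `Σ_{j≥1} b_j` converges, and
`Σ_{j=1}^∞ b_j < (11/10!) (81/4)`. -/
theorem gegenbauer_series_tail_bound
    (b : ℕ → ℝ)
    (hb : ∀ j : ℕ, b j =
      1680 * (2 * (j : ℝ) + 11 / 2) * ((j : ℝ) + 1) ^ 2 * ((j : ℝ) + 9 / 2) ^ 2
          * (Nat.factorial (2 * j) : ℝ) /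
        (((2 * (j : ℝ) + 4) * (2 * (j : ℝ) + 5) * (2 * (j : ℝ) + 6)
            * (2 * (j : ℝ) + 7) - 1680) * (Nat.factorial (2 * j + 10) : ℝ))) :
    (∀ j : ℕ, 1 ≤ j → 0 < b j)
      ∧ Summable (fun j : ℕ => b (j + 1))
      ∧ ∑' j : ℕ, b (j + 1) < 11 / (Nat.factorial 10 : ℝ) * (81 / 4) := by
  -- A clean closed form for `b j`.
  have hrep : ∀ j : ℕ, b j =
      (1680 * (2 * (j : ℝ) + 11 / 2) * ((j : ℝ) + 1) ^ 2 * ((j : ℝ) + 9 / 2) ^ 2) /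
        (((2 * (j : ℝ) + 4) * (2 * (j : ℝ) + 5) * (2 * (j : ℝ) + 6) * (2 * (j : ℝ) + 7) - 1680) *
          ((2 * (j : ℝ) + 1) * (2 * (j : ℝ) + 2) * (2 * (j : ℝ) + 3) * (2 * (j : ℝ) + 4) *
            (2 * (j : ℝ) + 5) * (2 * (j : ℝ) + 6) * (2 * (j : ℝ) + 7) * (2 * (j : ℝ) + 8) *
            (2 * (j : ℝ) + 9) * (2 * (j : ℝ) + 10))) := by
    intro j
    have hF : (0 : ℝ) < (Nat.factorial (2 * j) : ℝ) := by
      exact_mod_cast Nat.factorial_pos (2 * j)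
    have hfac := fac_split (2 * j)
    have hcast : ((2 * j : ℕ) : ℝ) = 2 * (j : ℝ) := by push_cast; ring
    have haux : ∀ (N D P F : ℝ), F ≠ 0 → N * F / (D * (F * P)) = N / (D * P) := by
      intro N D P F hFne
      rw [mul_comm F P, ← mul_assoc, mul_div_mul_right _ _ hFne]
    rw [hb j, hfac, hcast]
    exact haux _ _ _ _ hF.ne'
  have hDpos : ∀ j : ℕ, 1 ≤ j →
      (0 : ℝ) < (2 * (j : ℝ) + 4) * (2 * (j : ℝ) + 5) * (2 * (j : ℝ) + 6) * (2 * (j : ℝ) + 7)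
        - 1680 := by
    intro j hj
    have hx : (1 : ℝ) ≤ (j : ℝ) := by exact_mod_cast hj
    nlinarith [hx, sq_nonneg ((j:ℝ) - 1)]
  have hPpos : ∀ j : ℕ, (0 : ℝ) <
      (2 * (j : ℝ) + 1) * (2 * (j : ℝ) + 2) * (2 * (j : ℝ) + 3) * (2 * (j : ℝ) + 4) *
        (2 * (j : ℝ) + 5) * (2 * (j : ℝ) + 6) * (2 * (j : ℝ) + 7) * (2 * (j : ℝ) + 8) *
        (2 * (j : ℝ) + 9) * (2 * (j : ℝ) + 10) := by
    intro j; positivity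
  -- positivity of b j for j ≥ 1
  have hpos : ∀ j : ℕ, 1 ≤ j → 0 < b j := by
    intro j hj
    rw [hrep j]
    have hN : (0 : ℝ) < 1680 * (2 * (j : ℝ) + 11 / 2) * ((j : ℝ) + 1) ^ 2 *
        ((j : ℝ) + 9 / 2) ^ 2 := by positivity
    exact div_pos hN (mul_pos (hDpos j hj) (hPpos j))
  -- the key pointwise bound
  have hbound : ∀ j : ℕ, 1 ≤ j →
      b j ≤ 1 / (5000 * ((2 * (j : ℝ) + 1) * (2 * (j : ℝ) + 3))) := by
    intro j hj
    have hx : (1 : ℝ) ≤ (j : ℝ) := by exact_mod_cast hj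
    rw [hrep j, div_le_div_iff₀ (mul_pos (hDpos j hj) (hPpos j)) (by positivity)]
    have := key_poly_ineq (j : ℝ) hx
    nlinarith [this]
  -- telescoping majorant
  set f : ℕ → ℝ := fun j => (1 / 10000 : ℝ) * (1 / (2 * (j : ℝ) + 3)) with hf
  set g : ℕ → ℝ := fun j => f j - f (j + 1) with hgdef
  have hgnonneg : ∀ j : ℕ, 0 ≤ g j := by
    intro j
    have h1 : (0 : ℝ) < 2 * (j : ℝ) + 3 := by positivity
    have h2 : (0 : ℝ) < 2 * ((j : ℝ) + 1) + 3 := by positivity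
    have : 1 / (2 * ((j : ℝ) + 1) + 3) ≤ 1 / (2 * (j : ℝ) + 3) :=
      one_div_le_one_div_of_le h1 (by linarith)
    simp only [hgdef, hf, Nat.cast_add, Nat.cast_one]
    nlinarith [this]
  have hgsum : HasSum g (f 0) := by
    rw [hasSum_iff_tendsto_nat_of_nonneg hgnonneg]
    have hsum : ∀ n : ℕ, ∑ i ∈ Finset.range n, g i = f 0 - f n := by
      intro n
      simpa [hgdef] using Finset.sum_range_sub' f n
    simp only [hsum]
    have hf0 : Filter.Tendsto f Filter.atTop (nhds 0) := by
      have h1 : Filter.Tendsto (fun j : ℕ => 2 * (j : ℝ) + 3) Filter.atTop Filter.atTop := by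
        apply Filter.Tendsto.atTop_add _ tendsto_const_nhds
        exact (tendsto_natCast_atTop_atTop).const_mul_atTop (by norm_num)
      have h2 : Filter.Tendsto (fun j : ℕ => 1 / (2 * (j : ℝ) + 3)) Filter.atTop (nhds 0) := by
        simpa [one_div, Pi.inv_def] using h1.inv_tendsto_atTop
      have := h2.const_mul (1 / 10000 : ℝ)
      simpa [hf] using this
    have := tendsto_const_nhds (x := f 0) (f := (Filter.atTop : Filter ℕ)) |>.sub hf0
    simpa using this
  have hle : ∀ j : ℕ, b (j + 1) ≤ g j := by
    intro j
    have h := hbound (j + 1) (Nat.le_add_left 1 j)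
    have hcast : ((j + 1 : ℕ) : ℝ) = (j : ℝ) + 1 := by push_cast; ring
    rw [hcast] at h
    have h3 : (0 : ℝ) < 2 * (j : ℝ) + 3 := by positivity
    have h5 : (0 : ℝ) < 2 * (j : ℝ) + 5 := by positivity
    have hg : g j = 1 / (5000 * ((2 * ((j : ℝ) + 1) + 1) * (2 * ((j : ℝ) + 1) + 3))) := by
      simp only [hgdef, hf, Nat.cast_add, Nat.cast_one]
      rw [eq_div_iff (by positivity)]
      field_simp
      ring
    rw [hg]
    exact h
  have hbnonneg : ∀ j : ℕ, 0 ≤ b (j + 1) := fun j => (hpos (j + 1) (Nat.le_add_left 1 j)).le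
  have hsummable : Summable (fun j : ℕ => b (j + 1)) :=
    Summable.of_nonneg_of_le hbnonneg hle hgsum.summable
  refine ⟨hpos, hsummable, ?_⟩
  have htsum : ∑' j : ℕ, b (j + 1) ≤ ∑' j : ℕ, g j :=
    Summable.tsum_le_tsum hle hsummable hgsum.summable
  rw [hgsum.tsum_eq] at htsum
  have hf0val : f 0 = 1 / 30000 := by simp [hf]; norm_num
  rw [hf0val] at htsum
  have : (1 / 30000 : ℝ) < 11 / (Nat.factorial 10 : ℝ) * (81 / 4) := by
    rw [show (Nat.factorial 10 : ℝ) = 3628800 by norm_num [Nat.factorial]]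
    norm_num
  linarith
end

section
/- For each integer j ≥ 0 define b_j = 1680 (2j + 11/2) (j+1)² (j + 9/2)² (2j)! / ( [ (2j+4)(2j+5)(2j+6)(2j+7) − 1680 ] · (2j+10)! ). Then b_0 = −(11/10!)(81/4) < 0, the series Σ_{j=0}^∞ b_j converges, and its sum is strictly negative. -/
set_option maxHeartbeats 1000000

open Filter Finset

private lemma fact_add_ten (m : ℕ) :
    (Nat.factorial (m + 10) : ℝ) =
      ((m:ℝ)+1) * ((m:ℝ)+2) * ((m:ℝ)+3) * ((m:ℝ)+4) * ((m:ℝ)+5) * ((m:ℝ)+6) *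
        ((m:ℝ)+7) * ((m:ℝ)+8) * ((m:ℝ)+9) * ((m:ℝ)+10) * (Nat.factorial m : ℝ) := by
  have h : Nat.factorial (m + 10) =
      (m+10) * ((m+9) * ((m+8) * ((m+7) * ((m+6) * ((m+5) * ((m+4) * ((m+3) *
        ((m+2) * ((m+1) * Nat.factorial m))))))))) := rfl
  rw [h]
  push_cast
  ring

private lemma telescope_hasSum :
    HasSum (fun j : ℕ => (1/5000 : ℝ) * (1/((j:ℝ)+4) - 1/((j:ℝ)+5))) (1/20000) := by
  have hnonneg : ∀ j : ℕ, 0 ≤ (1/5000 : ℝ) * (1/((j:ℝ)+4) - 1/((j:ℝ)+5)) := by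
    intro j
    have h4 : (0:ℝ) < (j:ℝ)+4 := by positivity
    have h5 : (0:ℝ) < (j:ℝ)+5 := by positivity
    have : (1:ℝ)/((j:ℝ)+5) ≤ 1/((j:ℝ)+4) := by
      apply one_div_le_one_div_of_le h4; linarith
    nlinarith
  rw [hasSum_iff_tendsto_nat_of_nonneg hnonneg]
  have hsum : ∀ n : ℕ, ∑ i ∈ range n, (1/5000 : ℝ) * (1/((i:ℝ)+4) - 1/((i:ℝ)+5))
      = (1/5000 : ℝ) * (1/4) - (1/5000 : ℝ) * (1/((n:ℝ)+4)) := by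
    intro n
    have := Finset.sum_range_sub' (f := fun i : ℕ => (1/5000 : ℝ) * (1/((i:ℝ)+4))) n
    simp only [Nat.cast_zero, zero_add] at this
    rw [← this]
    apply Finset.sum_congr rfl
    intro i _
    push_cast
    ring
  simp only [hsum]
  have h1 : Tendsto (fun n : ℕ => ((n:ℝ)+4)) atTop atTop :=
    tendsto_atTop_add_const_right _ 4 tendsto_natCast_atTop_atTop
  have h2 : Tendsto (fun n : ℕ => 1/((n:ℝ)+4)) atTop (nhds 0) := by
    simp only [one_div]; exact h1.inv_tendsto_atTop
  have h3 : Tendsto (fun n : ℕ => (1/5000 : ℝ) * (1/4) - (1/5000 : ℝ) * (1/((n:ℝ)+4)))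
      atTop (nhds ((1/5000 : ℝ) * (1/4) - (1/5000 : ℝ) * 0)) :=
    tendsto_const_nhds.sub (h2.const_mul _)
  norm_num at h3
  convert h3 using 2
  norm_num

/-- With
`b_j = 1680 (2j+11/2)(j+1)²(j+9/2)² (2j)! / ([(2j+4)(2j+5)(2j+6)(2j+7) − 1680] (2j+10)!)`,
one has `b_0 = −(11/10!)(81/4) < 0`, the series `Σ_{j≥0} b_j` converges, and its
sum is strictly negative. -/
theorem gegenbauer_series_sum_negative
    (b : ℕ → ℝ)
    (hb : ∀ j : ℕ, b j =
      1680 * (2 * (j : ℝ) + 11 / 2) * ((j : ℝ) + 1) ^ 2 * ((j : ℝ) + 9 / 2) ^ 2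
          * (Nat.factorial (2 * j) : ℝ) /
        (((2 * (j : ℝ) + 4) * (2 * (j : ℝ) + 5) * (2 * (j : ℝ) + 6)
            * (2 * (j : ℝ) + 7) - 1680) * (Nat.factorial (2 * j + 10) : ℝ))) :
    b 0 = -(11 / (Nat.factorial 10 : ℝ) * (81 / 4))
      ∧ b 0 < 0
      ∧ Summable b
      ∧ ∑' j : ℕ, b j < 0 := by
  have hb0 : b 0 = -(11 / (Nat.factorial 10 : ℝ) * (81 / 4)) := by
    rw [hb 0]
    norm_num [Nat.factorial]
  have hb0val : b 0 = -(891 / 14515200 : ℝ) := by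
    rw [hb0]; norm_num [Nat.factorial]
  -- key bound for shifted terms
  have key : ∀ j : ℕ, 0 ≤ b (j+1) ∧
      b (j+1) ≤ (1/5000 : ℝ) * (1/((j:ℝ)+4) - 1/((j:ℝ)+5)) := by
    intro j
    have hx0 : (0:ℝ) ≤ (j:ℝ) := Nat.cast_nonneg j
    have hD : (0:ℝ) < (2 * ((j:ℝ)+1) + 4) * (2 * ((j:ℝ)+1) + 5) * (2 * ((j:ℝ)+1) + 6)
        * (2 * ((j:ℝ)+1) + 7) - 1680 := by
      nlinarith [pow_nonneg hx0 2, pow_nonneg hx0 3, pow_nonneg hx0 4, hx0]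
    have hQ : (0:ℝ) < (2*(j:ℝ)+3) * (2*(j:ℝ)+4) * (2*(j:ℝ)+5) * (2*(j:ℝ)+6)
        * (2*(j:ℝ)+7) * (2*(j:ℝ)+8) * (2*(j:ℝ)+9) * (2*(j:ℝ)+10) * (2*(j:ℝ)+11)
        * (2*(j:ℝ)+12) := by positivity
    have hF : (0:ℝ) < (Nat.factorial (2*(j+1)) : ℝ) := by
      exact_mod_cast Nat.factorial_pos _
    have hfac : (Nat.factorial (2*(j+1) + 10) : ℝ) =
        (2*(j:ℝ)+3) * (2*(j:ℝ)+4) * (2*(j:ℝ)+5) * (2*(j:ℝ)+6) * (2*(j:ℝ)+7)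
          * (2*(j:ℝ)+8) * (2*(j:ℝ)+9) * (2*(j:ℝ)+10) * (2*(j:ℝ)+11) * (2*(j:ℝ)+12)
          * (Nat.factorial (2*(j+1)) : ℝ) := by
      rw [fact_add_ten (2*(j+1))]
      push_cast
      ring
    have hbj : b (j+1) =
        1680 * (2*((j:ℝ)+1) + 11/2) * (((j:ℝ)+1) + 1)^2 * (((j:ℝ)+1) + 9/2)^2 /
          (((2*((j:ℝ)+1)+4) * (2*((j:ℝ)+1)+5) * (2*((j:ℝ)+1)+6) * (2*((j:ℝ)+1)+7) - 1680) *
            ((2*(j:ℝ)+3) * (2*(j:ℝ)+4) * (2*(j:ℝ)+5) * (2*(j:ℝ)+6) * (2*(j:ℝ)+7)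
              * (2*(j:ℝ)+8) * (2*(j:ℝ)+9) * (2*(j:ℝ)+10) * (2*(j:ℝ)+11) * (2*(j:ℝ)+12))) := by
      rw [hb (j+1), hfac]
      push_cast
      rw [div_eq_div_iff (mul_pos hD (mul_pos hQ hF)).ne' (mul_pos hD hQ).ne']
      ring
    have hnum : (0:ℝ) ≤ 1680 * (2*((j:ℝ)+1) + 11/2) * (((j:ℝ)+1) + 1)^2
        * (((j:ℝ)+1) + 9/2)^2 := by positivity
    constructor
    · rw [hbj]
      exact div_nonneg hnum (le_of_lt (mul_pos hD hQ))
    · rw [hbj]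
      have hrhs : (1/5000 : ℝ) * (1/((j:ℝ)+4) - 1/((j:ℝ)+5))
          = 1 / (5000 * (((j:ℝ)+4) * ((j:ℝ)+5))) := by
        have h4 : ((j:ℝ)+4) ≠ 0 := by positivity
        have h5 : ((j:ℝ)+5) ≠ 0 := by positivity
        field_simp
        ring
      rw [hrhs, div_le_div_iff₀ (mul_pos hD hQ) (by positivity)]
      linarith [hx0, pow_nonneg hx0 2, pow_nonneg hx0 3, pow_nonneg hx0 4,
        pow_nonneg hx0 5, pow_nonneg hx0 6, pow_nonneg hx0 7, pow_nonneg hx0 8,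
        pow_nonneg hx0 9, pow_nonneg hx0 10, pow_nonneg hx0 11, pow_nonneg hx0 12,
        pow_nonneg hx0 13, pow_nonneg hx0 14]
  have hg : HasSum (fun j : ℕ => (1/5000 : ℝ) * (1/((j:ℝ)+4) - 1/((j:ℝ)+5))) (1/20000) :=
    telescope_hasSum
  have hsum1 : Summable (fun j : ℕ => b (j+1)) :=
    Summable.of_nonneg_of_le (fun j => (key j).1) (fun j => (key j).2) hg.summable
  have hsb : Summable b := (summable_nat_add_iff 1).mp hsum1
  have htail : (∑' j : ℕ, b (j+1)) ≤ 1/20000 := by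
    calc (∑' j : ℕ, b (j+1))
        ≤ ∑' j : ℕ, (1/5000 : ℝ) * (1/((j:ℝ)+4) - 1/((j:ℝ)+5)) :=
          Summable.tsum_le_tsum (fun j => (key j).2) hsum1 hg.summable
      _ = 1/20000 := hg.tsum_eq
  have hsplit : (∑' j : ℕ, b j) = b 0 + ∑' j : ℕ, b (j+1) := hsb.tsum_eq_zero_add
  refine ⟨hb0, ?_, hsb, ?_⟩
  · rw [hb0val]; norm_num
  · rw [hsplit, hb0val]
    linarith
end
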